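/- Let H = [[A, B], [C, D]] be an (M+N)×(M+N) block matrix with A ∈ ℝ^{M×M}, D ∈ ℝ^{N×N} invertible. Fix indices 1 ≤ m, m' ≤ M. Let Sub_{m,m'}H denote the matrix obtained from H by deleting row m and column m' (both indices lying in the first M rows/columns). Then det(Sub_{m,m'}H) = det D · det(Sub_{m,m'}(A − B D⁻¹ C)), where Sub_{m,m'} of the Schur complement deletes its m-th row and m'-th column. -/
import Mathlib

open Matrix

theorem stmt5 {M N : ℕ} (A : Matrix (Fin (M+1)) (Fin (M+1)) ℝ)
    (B : Matrix (Fin (M+1)) (Fin N) ℝ) (C : Matrix (Fin N) (Fin (M+1)) ℝ)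
    (D : Matrix (Fin N) (Fin N) ℝ)
    (hD : IsUnit D.det) (m m' : Fin (M+1)) :
    ((Matrix.fromBlocks A B C D).submatrix
        (Sum.map m.succAbove (id : Fin N → Fin N))
        (Sum.map m'.succAbove (id : Fin N → Fin N))).det
      = D.det * ((A - B * D⁻¹ * C).submatrix m.succAbove m'.succAbove).det := by
  have h1 : (Matrix.fromBlocks A B C D).submatrix
        (Sum.map m.succAbove (id : Fin N → Fin N))
        (Sum.map m'.succAbove (id : Fin N → Fin N))
      = Matrix.fromBlocks (A.submatrix m.succAbove m'.succAbove)
        (B.submatrix m.succAbove id) (C.submatrix id m'.succAbove) D := by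
    ext (i|i) (j|j) <;> rfl
  haveI := D.invertibleOfIsUnitDet hD
  rw [h1, Matrix.det_fromBlocks₂₂, ← Matrix.invOf_eq_nonsing_inv D]
  congr 2
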